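/- Let A be an n×n positive-semidefinite matrix over ℝ or ℂ, let Ω be an n×k matrix, and let Â = AΩ((Ω*AΩ)†)Ω*A be the Nyström approximation. Then ‖A − Â‖₁ = ‖(I − P)A^{1/2}‖₂², where P is the orthogonal projector onto the range of A^{1/2}Ω. In particular, A − Â is positive semidefinite. -/

import Mathlib

open Matrix MeasureTheory ProbabilityTheory
open scoped ENNReal NNReal ComplexOrder Classical

namespace PsdSketch

variable {𝕜 : Type*} [RCLike 𝕜]

/-- The four Penrose conditions characterizing the Moore–Penrose pseudoinverse. -/
def IsMoorePenrose {m k : ℕ} (M : Matrix (Fin m) (Fin k) 𝕜)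
    (X : Matrix (Fin k) (Fin m) 𝕜) : Prop :=
  M * X * M = M ∧ X * M * X = X ∧ (M * X)ᴴ = M * X ∧ (X * M)ᴴ = X * M

/-- The Moore–Penrose pseudoinverse `M†` (the unique matrix satisfying the
Penrose conditions). -/
noncomputable def pinv {m k : ℕ} (M : Matrix (Fin m) (Fin k) 𝕜) :
    Matrix (Fin k) (Fin m) 𝕜 :=
  if h : ∃ X, IsMoorePenrose M X then h.choose else 0

/-- The Nyström approximation `Â = A Ω ((Ω* A Ω)†) Ω* A`. -/
noncomputable def nystrom {n k : ℕ} (A : Matrix (Fin n) (Fin n) 𝕜)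
    (Ω : Matrix (Fin n) (Fin k) 𝕜) : Matrix (Fin n) (Fin n) 𝕜 :=
  A * Ω * pinv (Ωᴴ * A * Ω) * Ωᴴ * A

/-- The `i`-th singular value of a square matrix, 0-indexed and listed in weakly
decreasing order (so `sval M 0 = σ₁(M)`), with `sval M i = 0` for `i ≥ n`. -/
noncomputable def sval {n : ℕ} (M : Matrix (Fin n) (Fin n) 𝕜) (i : ℕ) : ℝ :=
  if h : i < n then
    Real.sqrt
      ((Matrix.posSemidef_conjTranspose_mul_self M).1.eigenvalues
        (Tuple.sort (Matrix.posSemidef_conjTranspose_mul_self M).1.eigenvalues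
          (Fin.rev ⟨i, h⟩)))
  else 0

/-- The Schatten `p`-norm: the `ℓ_p` norm of the vector of singular values. -/
noncomputable def schatten {n : ℕ} (p : ℝ≥0∞) (M : Matrix (Fin n) (Fin n) 𝕜) : ℝ :=
  if p = ∞ then sval M 0
  else (∑ i ∈ Finset.range n, sval M i ^ p.toReal) ^ (1 / p.toReal)

/-- `σ_{r+1}^{(p)}(M)`, the optimal rank-`r` approximation error of `M` in the
Schatten `p`-norm: `(Σ_{i > r} σ_i(M)^p)^{1/p}` (for `p = ∞`, `σ_{r+1}(M)`). -/
noncomputable def tailNorm {n : ℕ} (p : ℝ≥0∞) (M : Matrix (Fin n) (Fin n) 𝕜)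
    (r : ℕ) : ℝ :=
  if p = ∞ then sval M r
  else (∑ i ∈ Finset.Ico r n, sval M i ^ p.toReal) ^ (1 / p.toReal)

/-- `B` is a (simultaneous) best rank-`r` approximation of `M` with respect to every
Schatten `p`-norm; this is the defining property of an `r`-truncated SVD `⟦M⟧_r`. -/
def IsBestRankApprox {n : ℕ} (M B : Matrix (Fin n) (Fin n) 𝕜) (r : ℕ) : Prop :=
  B.rank ≤ r ∧
    ∀ p : ℝ≥0∞, 1 ≤ p → ∀ C : Matrix (Fin n) (Fin n) 𝕜, C.rank ≤ r →
      schatten p (M - B) ≤ schatten p (M - C)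

/-- `⟦M⟧_r`: a best rank-`r` approximation of `M` (an `r`-truncated SVD). -/
noncomputable def truncate {n : ℕ} (M : Matrix (Fin n) (Fin n) 𝕜) (r : ℕ) :
    Matrix (Fin n) (Fin n) 𝕜 :=
  if h : ∃ B, IsBestRankApprox M B r then h.choose else 0

/-- The distribution of an `n × k` random matrix with independent standard normal
entries (matrices identified with functions `Fin n → Fin k → ℝ`). -/
noncomputable def gaussianEnsemble (n k : ℕ) : Measure (Fin n → Fin k → ℝ) :=
  Measure.pi fun _ => Measure.pi fun _ => gaussianReal 0 1


section AuxLemmas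

variable {𝕜 : Type*} [RCLike 𝕜]

lemma trace_conj_diag {m : ℕ} (U V : Matrix (Fin m) (Fin m) 𝕜) (h : V * U = 1)
    (f : Fin m → 𝕜) :
    (U * Matrix.diagonal f * V).trace = ∑ i, f i := by
  rw [Matrix.trace_mul_cycle, h, one_mul, Matrix.trace_diagonal]

lemma herm_trace {m : ℕ} {M : Matrix (Fin m) (Fin m) 𝕜} (hM : M.IsHermitian) :
    M.trace = ∑ i, (hM.eigenvalues i : 𝕜) := by
  conv_lhs => rw [hM.spectral_theorem, Unitary.conjStarAlgAut_apply]
  rw [trace_conj_diag _ _ (Matrix.UnitaryGroup.star_mul_self _)]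
  rfl

lemma psd_trace_sqrt {m : ℕ} {M : Matrix (Fin m) (Fin m) 𝕜} (hM : M.PosSemidef) :
    (hM.1.eigenvectorUnitary.1 * diagonal (RCLike.ofReal ∘ (√·) ∘ hM.1.eigenvalues) *
      (star hM.1.eigenvectorUnitary : Matrix (Fin _) (Fin _) 𝕜)).trace = ∑ i, ((Real.sqrt (hM.1.eigenvalues i) : ℝ) : 𝕜) := by
  rw [trace_conj_diag]
  · rfl
  · exact Matrix.UnitaryGroup.star_mul_self _

lemma conj_mul_conj {m : ℕ} (U : Matrix (Fin m) (Fin m) 𝕜) (hU : star U * U = 1)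
    (d e : Fin m → 𝕜) :
    (U * Matrix.diagonal d * star U) * (U * Matrix.diagonal e * star U)
      = U * Matrix.diagonal (d * e) * star U := by
  simp only [mul_assoc]
  rw [← mul_assoc (star U) U, hU, one_mul, ← mul_assoc (Matrix.diagonal d),
    Matrix.diagonal_mul_diagonal]
  rfl

lemma sqrtE_mul_self {m : ℕ} {M : Matrix (Fin m) (Fin m) 𝕜} (hM : M.PosSemidef) :
    (hM.1.eigenvectorUnitary.1 * diagonal (RCLike.ofReal ∘ (√·) ∘ hM.1.eigenvalues) *
      (star hM.1.eigenvectorUnitary : Matrix (Fin _) (Fin _) 𝕜)) * (hM.1.eigenvectorUnitary.1 * diagonal (RCLike.ofReal ∘ (√·) ∘ hM.1.eigenvalues) *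
      (star hM.1.eigenvectorUnitary : Matrix (Fin _) (Fin _) 𝕜)) = M := by
  rw [conj_mul_conj _ (Unitary.coe_star_mul_self _)]
  conv_rhs => rw [hM.1.spectral_theorem, Unitary.conjStarAlgAut_apply]
  congr 3
  funext i
  simp only [Pi.mul_apply, Function.comp_apply, ← RCLike.ofReal_mul,
    Real.mul_self_sqrt (hM.eigenvalues_nonneg i)]

lemma sqrtE_eq_cfc {m : ℕ} {M : Matrix (Fin m) (Fin m) 𝕜} (hM : M.PosSemidef) :
    (hM.1.eigenvectorUnitary.1 * diagonal (RCLike.ofReal ∘ (√·) ∘ hM.1.eigenvalues) *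
      (star hM.1.eigenvectorUnitary : Matrix (Fin _) (Fin _) 𝕜)) = cfc Real.sqrt M := by
  rw [hM.1.cfc_eq, IsHermitian.cfc, Unitary.conjStarAlgAut_apply]

lemma conj_conjTranspose {m : ℕ} (U : Matrix (Fin m) (Fin m) 𝕜) (d : Fin m → 𝕜) :
    (U * Matrix.diagonal d * star U)ᴴ = U * Matrix.diagonal (star d) * star U := by
  simp only [Matrix.star_eq_conjTranspose, Matrix.conjTranspose_mul,
    Matrix.diagonal_conjTranspose, Matrix.conjTranspose_conjTranspose, mul_assoc]

lemma sqrtE_herm {m : ℕ} {M : Matrix (Fin m) (Fin m) 𝕜} (hM : M.PosSemidef) :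
    (hM.1.eigenvectorUnitary.1 * diagonal (RCLike.ofReal ∘ (√·) ∘ hM.1.eigenvalues) *
      (star hM.1.eigenvectorUnitary : Matrix (Fin _) (Fin _) 𝕜))ᴴ = (hM.1.eigenvectorUnitary.1 * diagonal (RCLike.ofReal ∘ (√·) ∘ hM.1.eigenvalues) *
      (star hM.1.eigenvectorUnitary : Matrix (Fin _) (Fin _) 𝕜)) := by
  rw [conj_conjTranspose]
  congr 3
  funext i
  simp [RCLike.star_def, RCLike.conj_ofReal]

lemma isMoorePenrose_herm {m : ℕ} {M : Matrix (Fin m) (Fin m) 𝕜} (hM : M.IsHermitian) :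
    ∃ X, IsMoorePenrose M X := by
  classical
  set U : Matrix (Fin m) (Fin m) 𝕜 := (hM.eigenvectorUnitary : Matrix (Fin m) (Fin m) 𝕜)
    with hUdef
  have hUU : star U * U = 1 := Matrix.UnitaryGroup.star_mul_self _
  set d : Fin m → 𝕜 := RCLike.ofReal ∘ hM.eigenvalues with hd
  have hspec : M = U * Matrix.diagonal d * star U := hM.spectral_theorem
  set e : Fin m → 𝕜 := fun i => (d i)⁻¹ with he
  have hded : d * e * d = d := by
    funext i
    rcases eq_or_ne (d i) 0 with h | h
    · simp [Pi.mul_apply, he, h]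
    · simp [Pi.mul_apply, he, mul_inv_cancel₀ h]
  have hede : e * d * e = e := by
    funext i
    rcases eq_or_ne (d i) 0 with h | h
    · simp [Pi.mul_apply, he, h]
    · simp [Pi.mul_apply, he, inv_mul_cancel₀ h]
  have hstar_d : star d = d := by
    funext i
    simp [hd, RCLike.star_def, RCLike.conj_ofReal]
  have hstar_e : star e = e := by
    funext i
    simp only [Pi.star_apply, he, star_inv₀]
    rw [show star (d i) = d i from congrFun hstar_d i]
  refine ⟨U * Matrix.diagonal e * star U, ?_, ?_, ?_, ?_⟩
  · rw [hspec, conj_mul_conj U hUU, conj_mul_conj U hUU, hded]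
  · rw [hspec, conj_mul_conj U hUU, conj_mul_conj U hUU, hede]
  · rw [hspec, conj_mul_conj U hUU, conj_conjTranspose,
      show star (d * e) = d * e by rw [star_mul', hstar_d, hstar_e, mul_comm]]
  · rw [hspec, conj_mul_conj U hUU, conj_conjTranspose,
      show star (e * d) = e * d by rw [star_mul', hstar_d, hstar_e, mul_comm]]

lemma pinv_isMoorePenrose {m : ℕ} {M : Matrix (Fin m) (Fin m) 𝕜}
    (h : ∃ X, IsMoorePenrose M X) : IsMoorePenrose M (pinv M) := by
  rw [pinv, dif_pos h]
  exact h.choose_spec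

lemma mulVecLin_inj {n : ℕ} {M N : Matrix (Fin n) (Fin n) 𝕜}
    (h : M.mulVecLin = N.mulVecLin) : M = N := by
  apply Matrix.toLin'.injective
  rw [Matrix.toLin'_apply', Matrix.toLin'_apply', h]

lemma proj_eq {n : ℕ} {P Q : Matrix (Fin n) (Fin n) 𝕜}
    (hP : P.IsHermitian) (hP2 : P * P = P) (hQ : Q.IsHermitian) (hQ2 : Q * Q = Q)
    (hrange : LinearMap.range P.mulVecLin = LinearMap.range Q.mulVecLin) : P = Q := by
  have key : ∀ R S : Matrix (Fin n) (Fin n) 𝕜, R * R = R →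
      LinearMap.range S.mulVecLin ≤ LinearMap.range R.mulVecLin → R * S = S := by
    intro R S hR hle
    apply mulVecLin_inj
    apply LinearMap.ext
    intro v
    obtain ⟨u, hu⟩ := hle (LinearMap.mem_range_self S.mulVecLin v)
    simp only [Matrix.mulVecLin_apply] at hu ⊢
    rw [← Matrix.mulVec_mulVec, ← hu, Matrix.mulVec_mulVec, hR]
  have hPQ : P * Q = Q := key P Q hP2 hrange.ge
  have hQP : Q * P = P := key Q P hQ2 hrange.le
  calc P = Pᴴ := hP.symm
    _ = (Q * P)ᴴ := by rw [hQP]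
    _ = Pᴴ * Qᴴ := Matrix.conjTranspose_mul _ _
    _ = P * Q := by rw [hP, hQ]
    _ = Q := hPQ

lemma sum_sval {n : ℕ} (M : Matrix (Fin n) (Fin n) 𝕜) :
    ∑ i ∈ Finset.range n, sval M i =
      ∑ j : Fin n,
        Real.sqrt ((Matrix.posSemidef_conjTranspose_mul_self M).1.eigenvalues j) := by
  rw [← Fin.sum_univ_eq_sum_range]
  have h : ∀ j : Fin n, sval M (j : ℕ) =
      Real.sqrt ((Matrix.posSemidef_conjTranspose_mul_self M).1.eigenvalues
        (Tuple.sort (Matrix.posSemidef_conjTranspose_mul_self M).1.eigenvalues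
          (Fin.rev j))) := by
    intro j
    rw [sval, dif_pos j.isLt]
  simp_rw [h]
  exact Equiv.sum_comp (Fin.revPerm.trans
    (Tuple.sort (Matrix.posSemidef_conjTranspose_mul_self M).1.eigenvalues))
    (fun j => Real.sqrt ((Matrix.posSemidef_conjTranspose_mul_self M).1.eigenvalues j))

lemma sum_sval_sq {n : ℕ} (M : Matrix (Fin n) (Fin n) 𝕜) :
    ∑ i ∈ Finset.range n, sval M i ^ (2 : ℝ) =
      ∑ j : Fin n, (Matrix.posSemidef_conjTranspose_mul_self M).1.eigenvalues j := by
  rw [← Fin.sum_univ_eq_sum_range]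
  have h : ∀ j : Fin n, sval M (j : ℕ) ^ (2 : ℝ) =
      (Matrix.posSemidef_conjTranspose_mul_self M).1.eigenvalues
        (Tuple.sort (Matrix.posSemidef_conjTranspose_mul_self M).1.eigenvalues
          (Fin.rev j)) := by
    intro j
    rw [sval, dif_pos j.isLt,
      show (2 : ℝ) = ((2 : ℕ) : ℝ) by norm_num, Real.rpow_natCast, Real.sq_sqrt]
    exact (Matrix.posSemidef_conjTranspose_mul_self M).eigenvalues_nonneg _
  simp_rw [h]
  exact Equiv.sum_comp (Fin.revPerm.trans
    (Tuple.sort (Matrix.posSemidef_conjTranspose_mul_self M).1.eigenvalues))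
    (fun j => (Matrix.posSemidef_conjTranspose_mul_self M).1.eigenvalues j)

lemma schatten_one_eq {n : ℕ} (B : Matrix (Fin n) (Fin n) 𝕜) :
    schatten 1 (Bᴴ * B) = schatten 2 B ^ 2 := by
  have hBB := Matrix.posSemidef_conjTranspose_mul_self B
  have hN := Matrix.posSemidef_conjTranspose_mul_self (Bᴴ * B)
  have hsqrtN : (hN.1.eigenvectorUnitary.1 * diagonal (RCLike.ofReal ∘ (√·) ∘ hN.1.eigenvalues) *
      (star hN.1.eigenvectorUnitary : Matrix (Fin _) (Fin _) 𝕜)) = Bᴴ * B := by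
    rw [sqrtE_eq_cfc hN, show (Bᴴ * B)ᴴ * (Bᴴ * B) = (Bᴴ * B) ^ 2 by rw [pow_two, hBB.1],
      ← cfc_comp_pow Real.sqrt 2 (Bᴴ * B) (ha := hBB.1.isSelfAdjoint)]
    have hcongr : (spectrum ℝ (Bᴴ * B)).EqOn (fun x : ℝ => Real.sqrt (x ^ 2)) (fun x => x) := by
      intro x hx
      obtain ⟨i, rfl⟩ := hBB.1.spectrum_real_eq_range_eigenvalues ▸ hx
      exact Real.sqrt_sq (hBB.eigenvalues_nonneg i)
    rw [cfc_congr hcongr, cfc_id' ℝ (Bᴴ * B) hBB.1.isSelfAdjoint]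
  have S1 : ∑ j : Fin n, Real.sqrt (hN.1.eigenvalues j) = RCLike.re ((Bᴴ * B).trace) := by
    have := psd_trace_sqrt hN
    rw [hsqrtN] at this
    rw [this, map_sum]
    simp [RCLike.ofReal_re]
  have S2 : ∑ j : Fin n, hBB.1.eigenvalues j = RCLike.re ((Bᴴ * B).trace) := by
    rw [herm_trace hBB.1, map_sum]
    simp [RCLike.ofReal_re]
  have hLHS : schatten 1 (Bᴴ * B) = RCLike.re ((Bᴴ * B).trace) := by
    rw [schatten, if_neg (by simp : (1 : ℝ≥0∞) ≠ ∞)]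
    simp only [ENNReal.toReal_one, Real.rpow_one, one_div_one]
    rw [sum_sval, S1]
  rw [hLHS, schatten, if_neg (by simp : (2 : ℝ≥0∞) ≠ ∞)]
  simp only [ENNReal.toReal_ofNat]
  have hsum := sum_sval_sq B
  have h0 : (0 : ℝ) ≤ ∑ i ∈ Finset.range n, sval B i ^ (2 : ℝ) := by
    rw [hsum]
    exact Finset.sum_nonneg fun j _ => hBB.eigenvalues_nonneg j
  rw [← Real.rpow_natCast ((∑ i ∈ Finset.range n, sval B i ^ (2 : ℝ)) ^ (1 / 2 : ℝ)) 2,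
    ← Real.rpow_mul h0]
  rw [show (1 / 2 : ℝ) * ((2 : ℕ) : ℝ) = 1 by norm_num, Real.rpow_one, hsum, S2]

end AuxLemmas

theorem stmt8 {𝕜 : Type*} [RCLike 𝕜] {n k : ℕ} (A : Matrix (Fin n) (Fin n) 𝕜)
    (hA : A.PosSemidef) (Ω : Matrix (Fin n) (Fin k) 𝕜)
    (P : Matrix (Fin n) (Fin n) 𝕜) (hP : P.IsHermitian) (hP2 : P * P = P)
    (hPrange : LinearMap.range P.mulVecLin = LinearMap.range ((hA.1.eigenvectorUnitary.1 * diagonal (RCLike.ofReal ∘ (√·) ∘ hA.1.eigenvalues) *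
      (star hA.1.eigenvectorUnitary : Matrix (Fin n) (Fin n) 𝕜)) * Ω).mulVecLin) :
    schatten 1 (A - nystrom A Ω) = schatten 2 ((1 - P) * (hA.1.eigenvectorUnitary.1 * diagonal (RCLike.ofReal ∘ (√·) ∘ hA.1.eigenvalues) *
      (star hA.1.eigenvectorUnitary : Matrix (Fin n) (Fin n) 𝕜))) ^ 2 ∧
      (A - nystrom A Ω).PosSemidef := by
  classical
  set S : Matrix (Fin n) (Fin n) 𝕜 := (hA.1.eigenvectorUnitary.1 * diagonal (RCLike.ofReal ∘ (√·) ∘ hA.1.eigenvalues) *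
      (star hA.1.eigenvectorUnitary : Matrix (Fin n) (Fin n) 𝕜)) with hSdef
  set C : Matrix (Fin n) (Fin k) 𝕜 := S * Ω with hC
  have hSherm : Sᴴ = S := sqrtE_herm hA
  have hSS : S * S = A := sqrtE_mul_self hA
  have hCh : Cᴴ = Ωᴴ * S := by rw [hC, Matrix.conjTranspose_mul, hSherm]
  have hMeq : Ωᴴ * A * Ω = Cᴴ * C := by
    rw [hCh, hC]
    conv_lhs => rw [← hSS]
    simp only [Matrix.mul_assoc]
  set X : Matrix (Fin k) (Fin k) 𝕜 := pinv (Cᴴ * C) with hX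
  obtain ⟨h1, h2, h3, h4⟩ : IsMoorePenrose (Cᴴ * C) X :=
    pinv_isMoorePenrose (isMoorePenrose_herm (Matrix.posSemidef_conjTranspose_mul_self C).1)
  -- L1 : C * (X * (Cᴴ * C)) = C
  have hD0 : Cᴴ * (C * (X * (Cᴴ * C)) - C) = 0 := by
    rw [Matrix.mul_sub, show Cᴴ * (C * (X * (Cᴴ * C))) = Cᴴ * C by
      rw [← Matrix.mul_assoc, ← Matrix.mul_assoc]; exact h1, sub_self]
  have hDconj : (C * (X * (Cᴴ * C)) - C)ᴴ = X * (Cᴴ * C) * Cᴴ - Cᴴ := by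
    rw [Matrix.conjTranspose_sub, Matrix.conjTranspose_mul, h4]
  have hz : (C * (X * (Cᴴ * C)) - C)ᴴ * (C * (X * (Cᴴ * C)) - C) = 0 := by
    rw [hDconj, Matrix.sub_mul, Matrix.mul_assoc, hD0, Matrix.mul_zero, sub_self]
  have L1 : C * (X * (Cᴴ * C)) = C :=
    sub_eq_zero.mp (Matrix.conjTranspose_mul_self_eq_zero.mp hz)
  have L3 : Cᴴ * (C * (Xᴴ * Cᴴ)) = Cᴴ := by
    have := congrArg Matrix.conjTranspose L1
    simpa only [Matrix.conjTranspose_mul, Matrix.conjTranspose_conjTranspose,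
      Matrix.mul_assoc] using this
  have h5 : C * (Xᴴ * Cᴴ) = C * (X * Cᴴ) := by
    calc C * (Xᴴ * Cᴴ) = C * (X * (Cᴴ * C)) * (Xᴴ * Cᴴ) := by rw [L1]
      _ = C * (X * (Cᴴ * (C * (Xᴴ * Cᴴ)))) := by simp only [Matrix.mul_assoc]
      _ = C * (X * Cᴴ) := by rw [L3]
  have hQC : C * (X * Cᴴ) * C = C := by
    calc C * (X * Cᴴ) * C = C * (X * (Cᴴ * C)) := by simp only [Matrix.mul_assoc]
      _ = C := L1
  have hQQ : (C * (X * Cᴴ)) * (C * (X * Cᴴ)) = C * (X * Cᴴ) := by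
    calc (C * (X * Cᴴ)) * (C * (X * Cᴴ)) = C * (X * (Cᴴ * C)) * (X * Cᴴ) := by
          simp only [Matrix.mul_assoc]
      _ = C * (X * Cᴴ) := by rw [L1]
  have hQH : (C * (X * Cᴴ)).IsHermitian := by
    calc (C * (X * Cᴴ))ᴴ = C * (Xᴴ * Cᴴ) := by
          simp only [Matrix.conjTranspose_mul, Matrix.conjTranspose_conjTranspose,
            Matrix.mul_assoc]
      _ = C * (X * Cᴴ) := h5
  have hrangeQ : LinearMap.range (C * (X * Cᴴ)).mulVecLin = LinearMap.range C.mulVecLin := by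
    apply le_antisymm
    · rw [Matrix.mulVecLin_mul]
      exact LinearMap.range_comp_le_range _ _
    · conv_lhs => rw [← hQC]
      rw [Matrix.mulVecLin_mul]
      exact LinearMap.range_comp_le_range _ _
  have hPQ : P = C * (X * Cᴴ) :=
    proj_eq hP hP2 hQH hQQ (hPrange.trans hrangeQ.symm)
  have hNys : nystrom A Ω = S * (C * (X * Cᴴ) * S) := by
    rw [nystrom, hMeq, ← hX]
    conv_lhs => rw [← hSS]
    rw [hC, hCh]
    simp only [Matrix.mul_assoc]
  have hP1 : P * ((1 : Matrix (Fin n) (Fin n) 𝕜) - P) = 0 := by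
    rw [mul_sub, mul_one, hP2, sub_self]
  have hproj : ((1 : Matrix (Fin n) (Fin n) 𝕜) - P) * (1 - P) = 1 - P := by
    rw [sub_mul, one_mul, hP1, sub_zero]
  have h1P : ((1 : Matrix (Fin n) (Fin n) 𝕜) - P)ᴴ = 1 - P := by
    rw [Matrix.conjTranspose_sub, Matrix.conjTranspose_one, hP]
  have key : A - nystrom A Ω = ((1 - P) * S)ᴴ * ((1 - P) * S) := by
    rw [Matrix.conjTranspose_mul, hSherm, h1P, hNys, ← hPQ]
    conv_lhs => rw [← hSS]
    calc S * S - S * (P * S)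
        = S * ((1 - P) * S) := by rw [← mul_sub, sub_mul, one_mul]
      _ = S * (1 - P) * ((1 - P) * S) := by
          rw [mul_assoc S, ← mul_assoc (1 - P) (1 - P), hproj]
  constructor
  · rw [key]
    exact schatten_one_eq ((1 - P) * S)
  · rw [key]
    exact Matrix.posSemidef_conjTranspose_mul_self _

end PsdSketch
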